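/- Let t, t' ∈ B_n be distinct bracketings of size n, and let G be a digraph whose graph algebra A(G) satisfies the bracketing identity t ≈ t'. Then every strongly connected component of G is either trivial or an m-whirl for some divisor m of M(t,t'). -/

import Mathlib

namespace AssocSpec

/-- Bracketings of products `x₁ x₂ ⋯ xₙ` represented as binary trees whose
leaves, read from left to right, are the variables `x₁, …, xₙ`. -/
inductive BTree : Type
  | leaf : BTree
  | node : BTree → BTree → BTree

namespace BTree

/-- The size of a bracketing: its number of variables (leaves). -/
def size : BTree → ℕ
  | leaf => 1
  | node l r => l.size + r.size

/-- Evaluate a bracketing in a magma `(A, op)`, the leaves taking the values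
`f k, f (k+1), …` from left to right. -/
def evalFrom {A : Type*} (op : A → A → A) : BTree → (ℕ → A) → ℕ → A
  | leaf, f, k => f k
  | node l r, f, k => op (evalFrom op l f k) (evalFrom op r f (k + l.size))

/-- The term operation induced by a bracketing `t` on a magma `(A, op)`;
the `i`-th variable (0-indexed) takes the value `f i`. -/
def termOp {A : Type*} (op : A → A → A) (t : BTree) (f : ℕ → A) : A :=
  evalFrom op t f 0

/-- The depth sequence of the DFS tree `G(t)` of a bracketing `t`: the `i`-th
entry is the depth of the `i`-th variable (0-indexed) in `G(t)`. -/
def depths : BTree → List ℕ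
  | leaf => [0]
  | node l r => l.depths ++ r.depths.map (· + 1)

/-- The depth of the `i`-th variable (0-indexed) in the DFS tree `G(t)`. -/
def depth (t : BTree) (i : ℕ) : ℕ := t.depths.getD i 0

/-- The height of the DFS tree `G(t)`: the maximum depth of a variable. -/
def height (t : BTree) : ℕ := t.depths.foldr max 0

/-- The edges of the DFS tree `G(t)`, the variables being indexed from the
given offset: `(p, c)` is an edge iff `x_p` is the parent of `x_c`. -/
def edgesFrom : BTree → ℕ → List (ℕ × ℕ)
  | leaf, _ => []
  | node l r, k => (k, k + l.size) :: (l.edgesFrom k ++ r.edgesFrom (k + l.size))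

/-- The edges of the DFS tree `G(t)` (variables indexed from `0`). -/
def edges (t : BTree) : List (ℕ × ℕ) := t.edgesFrom 0

end BTree

open Classical in
/-- The operation of the graph algebra of the digraph with vertex set `V` and
edge relation `E`; `none` plays the role of `∞`. -/
noncomputable def gaOp {V : Type*} (E : V → V → Prop) :
    Option V → Option V → Option V
  | some x, some y => if E x y then some x else none
  | _, _ => none

/-- The magma `(A, op)` satisfies the bracketing identity `t ≈ t'`. -/
def Satisfies {A : Type*} (op : A → A → A) (t t' : BTree) : Prop :=
  ∀ f : ℕ → A, BTree.termOp op t f = BTree.termOp op t' f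

/-- The `n`-th member `s_n` of the associative spectrum of the magma `(A, op)`:
the number of distinct term operations induced by bracketings of size `n`. -/
noncomputable def spectrum {A : Type*} (op : A → A → A) (n : ℕ) : ℕ :=
  Set.ncard {g : (ℕ → A) → A | ∃ t : BTree, t.size = n ∧ g = BTree.termOp op t}

/-- Reachability (by a walk) in the digraph with edge relation `E`. -/
def Reach {V : Type*} (E : V → V → Prop) : V → V → Prop :=
  Relation.ReflTransGen E

/-- `u` and `v` lie in the same strongly connected component. -/
def SameSCC {V : Type*} (E : V → V → Prop) (u v : V) : Prop :=
  Reach E u v ∧ Reach E v u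

/-- The strongly connected component of `v`, as a set of vertices. -/
def scc {V : Type*} (E : V → V → Prop) (v : V) : Set V :=
  {u | SameSCC E u v}

/-- `v` lies in a nontrivial strongly connected component (one carrying at
least one edge), i.e. `v` lies on a closed walk of positive length. -/
def InNontrivialSCC {V : Type*} (E : V → V → Prop) (v : V) : Prop :=
  ∃ u, E v u ∧ Reach E u v

/-- The induced subgraph on the set `K` (with the edge relation `E`) is an
`m`-whirl: `K` is partitioned into blocks `B 0, …, B (m-1)` so that edges go
exactly from each block to the cyclically next one. -/
def IsWhirlOn {V : Type*} (E : V → V → Prop) (K : Set V) (m : ℕ) : Prop :=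
  ∃ B : ZMod m → Set V,
    (∀ i, (B i).Nonempty) ∧
    (∀ i, B i ⊆ K) ∧
    (∀ x ∈ K, ∃! i, x ∈ B i) ∧
    (∀ x ∈ K, ∀ y ∈ K, (E x y ↔ ∃ i, x ∈ B i ∧ y ∈ B (i + 1)))

/-- `p 0 → p 1 → ⋯ → p len` is a path (a walk with pairwise distinct
vertices) in the digraph with edge relation `E`. -/
def IsPath {V : Type*} (E : V → V → Prop) (len : ℕ) (p : ℕ → V) : Prop :=
  (∀ i < len, E (p i) (p (i + 1))) ∧
  (∀ i ≤ len, ∀ j ≤ len, p i = p j → i = j)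

/-- The walk `p 0 → ⋯ → p len` is pleasant: all its vertices belong to
trivial strongly connected components. -/
def IsPleasant {V : Type*} (E : V → V → Prop) (len : ℕ) (p : ℕ → V) : Prop :=
  ∀ i ≤ len, ¬ InNontrivialSCC E (p i)

/-- The connected component `K` (of an undirected graph) is complete
bipartite: it splits into two nonempty parts with edges exactly between
vertices of different parts. -/
def IsCompleteBipartiteOn {V : Type*} (E : V → V → Prop) (K : Set V) : Prop :=
  ∃ B1 B2 : Set V, B1.Nonempty ∧ B2.Nonempty ∧ B1 ∪ B2 = K ∧ B1 ∩ B2 = ∅ ∧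
    ∀ x ∈ K, ∀ y ∈ K, (E x y ↔ (x ∈ B1 ∧ y ∈ B2) ∨ (x ∈ B2 ∧ y ∈ B1))

/-- A DFS tree of size `n`: a rooted directed tree on the vertices
`x₁, …, xₙ` (here `Fin n`, the root being `0`), given by its parent function,
such that the parent of every non-root vertex precedes it and the vertex set
of the induced subtree rooted at any vertex `i` is an interval `[i, i']`.
(The parent of the root is, by convention, the root itself.) -/
structure DFSTree (n : ℕ) where
  parent : Fin n → Fin n
  parent_lt : ∀ i : Fin n, 0 < (i : ℕ) → (parent i : ℕ) < (i : ℕ)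
  parent_root : ∀ i : Fin n, (i : ℕ) = 0 → parent i = i
  interval : ∀ i j k : Fin n, i ≤ j → j ≤ k →
    (∃ a : ℕ, parent^[a] k = i) → (∃ a : ℕ, parent^[a] j = i)

/-- The depth of the vertex `i` in a DFS tree: the length of the path from
the root to `i`. -/
noncomputable def DFSTree.depth {n : ℕ} (T : DFSTree n) (i : Fin n) : ℕ :=
  sInf {k : ℕ | (T.parent^[k] i : ℕ) = 0}

/-- The height of a DFS tree: the maximum depth of a vertex. -/
noncomputable def DFSTree.height {n : ℕ} (T : DFSTree n) : ℕ :=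
  Finset.univ.sup fun i => T.depth i

/-- The vertex `i` is a leaf (childless vertex) of the DFS tree `T`. -/
def DFSTree.IsLeaf {n : ℕ} (T : DFSTree n) (i : Fin n) : Prop :=
  ∀ j : Fin n, T.parent j = i → j = i

/-- `t_h(n)`: the number of DFS trees of size `n` of height at most `h`. -/
noncomputable def tcount (h n : ℕ) : ℕ :=
  Nat.card {T : DFSTree n // T.height ≤ h}

/-- `d` is a zag sequence: `d₁ = 0`, `d₂ = 1`, and
`1 ≤ d_{i+1} ≤ d_i + 1` for all `i` (1-indexed as in the paper;
here `d : Fin n → ℕ` is 0-indexed). -/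
def IsZag {n : ℕ} (d : Fin n → ℕ) : Prop :=
  (∀ h : 0 < n, d ⟨0, h⟩ = 0) ∧
  (∀ h : 1 < n, d ⟨1, h⟩ = 1) ∧
  (∀ i : ℕ, ∀ h : i + 1 < n,
    1 ≤ d ⟨i + 1, h⟩ ∧ d ⟨i + 1, h⟩ ≤ d ⟨i, Nat.lt_of_succ_lt h⟩ + 1)

/-- `M(t,t')`: the largest `m` such that the depth sequences of the DFS trees
of the bracketings `t` and `t'` are congruent modulo `m`. -/
noncomputable def Mval (t t' : BTree) : ℕ :=
  sSup {m : ℕ | ∀ i < t.size, t.depth i ≡ t'.depth i [MOD m]}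


/-! ### Auxiliary lemmas -/

namespace BTree

lemma size_pos (t : BTree) : 1 ≤ t.size := by
  induction t with
  | leaf => simp [size]
  | node l r ihl ihr => simp [size]; omega

lemma depths_length (t : BTree) : t.depths.length = t.size := by
  induction t with
  | leaf => simp [depths, size]
  | node l r ihl ihr => simp [depths, size, ihl, ihr]

lemma getD_map_add_one (xs : List ℕ) (i : ℕ) (h : i < xs.length) :
    (xs.map (· + 1)).getD i 0 = xs.getD i 0 + 1 := by
  rw [List.getD_eq_getElem _ _ (by simpa using h), List.getD_eq_getElem _ _ h]
  simp

lemma depth_zero (t : BTree) : t.depth 0 = 0 := by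
  induction t with
  | leaf => simp [depth, depths]
  | node l r ihl ihr =>
    have h0 : 0 < l.depths.length := by rw [depths_length]; exact l.size_pos
    rw [depth, depths, List.getD_append _ _ _ _ h0]
    exact ihl

lemma depth_pos (t : BTree) (i : ℕ) (h1 : 0 < i) (h2 : i < t.size) : 0 < t.depth i := by
  induction t generalizing i with
  | leaf => simp [size] at h2; omega
  | node l r ihl ihr =>
    simp only [size] at h2
    by_cases hi : i < l.size
    · have hlt : i < l.depths.length := by rw [depths_length]; exact hi
      rw [depth, depths, List.getD_append _ _ _ _ hlt]
      exact ihl i h1 hi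
    · have hge : l.depths.length ≤ i := by rw [depths_length]; omega
      rw [depth, depths, List.getD_append_right _ _ _ _ hge]
      rw [depths_length]
      rw [getD_map_add_one _ _ (by rw [depths_length]; omega)]
      omega

lemma depth_eq_zero_iff (t : BTree) (i : ℕ) (h2 : i < t.size) : t.depth i = 0 ↔ i = 0 := by
  constructor
  · intro h
    by_contra hne
    have := depth_pos t i (by omega) h2
    omega
  · rintro rfl; exact depth_zero t

lemma depths_injective : ∀ t t' : BTree, t.depths = t'.depths → t = t' := by
  have key : ∀ l r l' r' : BTree, (node l r).depths = (node l' r').depths →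
      l.size < l'.size → False := by
    intro l r l' r' h hlt
    have hrp := r'.size_pos
    have hlp := l.size_pos
    have hrp2 := r.size_pos
    have hlen : (node l r).depths.length = (node l' r').depths.length := by rw [h]
    have hsz : (node l r).size = (node l' r').size := by
      rw [← depths_length, ← depths_length, hlen]
    simp only [size] at hsz
    set j := l'.size with hj
    have hval' : (node l' r').depths.getD j 0 = 1 := by
      rw [depths, List.getD_append_right _ _ _ _ (by rw [depths_length])]
      rw [depths_length, Nat.sub_self, getD_map_add_one _ _ (by rw [depths_length]; exact r'.size_pos)]
      have := depth_zero r'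
      rw [depth] at this
      omega
    have hval : (node l r).depths.getD j 0 = r.depth (j - l.size) + 1 := by
      rw [depths, List.getD_append_right _ _ _ _ (by rw [depths_length]; omega)]
      rw [depths_length, getD_map_add_one _ _ (by rw [depths_length]; omega)]
      rfl
    rw [h, hval'] at hval
    have hpos : 0 < r.depth (j - l.size) :=
      depth_pos r _ (by omega) (by omega)
    omega
  intro t
  induction t with
  | leaf =>
    intro t' h
    cases t' with
    | leaf => rfl
    | node l' r' =>
      exfalso
      have := depths_length (node l' r')
      rw [← h] at this
      simp [depths, size] at this
      have := l'.size_pos; have := r'.size_pos; omega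
  | node l r ihl ihr =>
    intro t' h
    cases t' with
    | leaf =>
      exfalso
      have := depths_length (node l r)
      rw [h] at this
      simp [depths, size] at this
      have := l.size_pos; have := r.size_pos; omega
    | node l' r' =>
      have hsz : l.size = l'.size := by
        rcases lt_trichotomy l.size l'.size with h1 | h1 | h1
        · exact absurd (key l r l' r' h h1) (by simp)
        · exact h1
        · exact absurd (key l' r' l r h.symm h1) (by simp)
      have h2 : l.depths ++ r.depths.map (· + 1) = l'.depths ++ r'.depths.map (· + 1) := h
      have hlens : l.depths.length = l'.depths.length := by
        rw [depths_length, depths_length, hsz]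
      obtain ⟨hL, hR⟩ := List.append_inj h2 hlens
      have hrr : r.depths = r'.depths :=
        List.map_injective_iff.mpr (fun a b => by omega) hR
      rw [ihl _ hL, ihr _ hrr]

lemma edgesFrom_bounds (t : BTree) (k : ℕ) :
    ∀ pr ∈ t.edgesFrom k, k ≤ pr.1 ∧ pr.1 < pr.2 ∧ pr.2 < k + t.size := by
  induction t generalizing k with
  | leaf => simp [edgesFrom]
  | node l r ihl ihr =>
    intro pr hpr
    simp only [edgesFrom, List.mem_cons, List.mem_append] at hpr
    rcases hpr with h | h | h
    · subst h; refine ⟨le_refl _, by have := l.size_pos; simp; omega, ?_⟩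
      simp [size]; have := r.size_pos; omega
    · have := ihl k pr h; simp [size]; omega
    · have := ihr (k + l.size) pr h; simp [size] at this ⊢; omega

lemma edgesFrom_depth (t : BTree) (k : ℕ) :
    ∀ pr ∈ t.edgesFrom k, t.depth (pr.2 - k) = t.depth (pr.1 - k) + 1 := by
  induction t generalizing k with
  | leaf => simp [edgesFrom]
  | node l r ihl ihr =>
    intro pr hpr
    simp only [edgesFrom, List.mem_cons, List.mem_append] at hpr
    rcases hpr with h | h | h
    · subst h
      simp only [Nat.sub_self, Nat.add_sub_cancel_left]
      rw [depth_zero]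
      show (node l r).depth l.size = 1
      rw [depth, depths, List.getD_append_right _ _ _ _ (by rw [depths_length])]
      rw [depths_length, Nat.sub_self, getD_map_add_one _ _ (by rw [depths_length]; exact r.size_pos)]
      have := depth_zero r
      rw [depth] at this
      omega
    · obtain ⟨hb1, hb2, hb3⟩ := edgesFrom_bounds l k pr h
      have := ihl k pr h
      have e1 : (node l r).depth (pr.2 - k) = l.depth (pr.2 - k) := by
        rw [depth, depths, List.getD_append _ _ _ _ (by rw [depths_length]; omega)]; rfl
      have e2 : (node l r).depth (pr.1 - k) = l.depth (pr.1 - k) := by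
        rw [depth, depths, List.getD_append _ _ _ _ (by rw [depths_length]; omega)]; rfl
      rw [e1, e2, this]
    · obtain ⟨hb1, hb2, hb3⟩ := edgesFrom_bounds r (k + l.size) pr h
      have := ihr (k + l.size) pr h
      have e1 : (node l r).depth (pr.2 - k) = r.depth (pr.2 - (k + l.size)) + 1 := by
        rw [depth, depths, List.getD_append_right _ _ _ _ (by rw [depths_length]; omega)]
        rw [depths_length, getD_map_add_one _ _ (by rw [depths_length]; omega)]
        have : pr.2 - k - l.size = pr.2 - (k + l.size) := by omega
        rw [this]; rfl
      have e2 : (node l r).depth (pr.1 - k) = r.depth (pr.1 - (k + l.size)) + 1 := by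
        rw [depth, depths, List.getD_append_right _ _ _ _ (by rw [depths_length]; omega)]
        rw [depths_length, getD_map_add_one _ _ (by rw [depths_length]; omega)]
        have : pr.1 - k - l.size = pr.1 - (k + l.size) := by omega
        rw [this]; rfl
      rw [e1, e2, this]

lemma exists_parent (t : BTree) (k c : ℕ) (h1 : k < c) (h2 : c < k + t.size) :
    ∃ p, (p, c) ∈ t.edgesFrom k := by
  induction t generalizing k with
  | leaf => simp [size] at h2; omega
  | node l r ihl ihr =>
    simp only [size] at h2
    rcases lt_trichotomy c (k + l.size) with hc | hc | hc
    · obtain ⟨p, hp⟩ := ihl k h1 hc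
      exact ⟨p, by simp [edgesFrom, hp]⟩
    · exact ⟨k, by simp [edgesFrom, hc]⟩
    · obtain ⟨p, hp⟩ := ihr (k + l.size) hc (by omega)
      exact ⟨p, by simp [edgesFrom, hp]⟩

end BTree

section GraphAlg

variable {V : Type*} (E : V → V → Prop)

open Classical in
lemma gaOp_some_some (x y : V) :
    gaOp E (some x) (some y) = if E x y then some x else none := rfl

lemma gaOp_none_right (o : Option V) : gaOp E o none = none := by
  cases o <;> rfl

lemma gaOp_none_left (o : Option V) : gaOp E none o = none := by
  cases o <;> rfl

open Classical in
lemma evalFrom_gaOp (t : BTree) (g : ℕ → V) (k : ℕ) :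
    BTree.evalFrom (gaOp E) t (fun i => some (g i)) k =
      if ∀ pr ∈ t.edgesFrom k, E (g pr.1) (g pr.2) then some (g k) else none := by
  induction t generalizing k with
  | leaf => simp [BTree.evalFrom, BTree.edgesFrom]
  | node l r ihl ihr =>
    rw [BTree.evalFrom, ihl, ihr]
    have hc : (∀ pr ∈ (BTree.node l r).edgesFrom k, E (g pr.1) (g pr.2)) ↔
        (E (g k) (g (k + l.size)) ∧ (∀ pr ∈ l.edgesFrom k, E (g pr.1) (g pr.2)) ∧
          (∀ pr ∈ r.edgesFrom (k + l.size), E (g pr.1) (g pr.2))) := by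
      simp only [BTree.edgesFrom, List.mem_cons, List.mem_append]
      constructor
      · intro h
        exact ⟨h _ (Or.inl rfl), fun pr hpr => h pr (Or.inr (Or.inl hpr)),
          fun pr hpr => h pr (Or.inr (Or.inr hpr))⟩
      · rintro ⟨h1, h2, h3⟩ pr hpr
        rcases hpr with rfl | h | h
        exacts [h1, h2 _ h, h3 _ h]
    by_cases hl : ∀ pr ∈ l.edgesFrom k, E (g pr.1) (g pr.2)
    · by_cases hr : ∀ pr ∈ r.edgesFrom (k + l.size), E (g pr.1) (g pr.2)
      · by_cases he : E (g k) (g (k + l.size))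
        · rw [if_pos hl, if_pos hr, gaOp_some_some, if_pos he,
            if_pos (hc.mpr ⟨he, hl, hr⟩)]
        · rw [if_pos hl, if_pos hr, gaOp_some_some, if_neg he,
            if_neg (fun h => he (hc.mp h).1)]
      · rw [if_pos hl, if_neg hr, gaOp_none_right,
          if_neg (fun h => hr (hc.mp h).2.2)]
    · rw [if_neg hl, gaOp_none_left, if_neg (fun h => hl (hc.mp h).2.1)]

lemma hom_transfer {t t' : BTree} (hsat : Satisfies (gaOp E) t t') (g : ℕ → V) :
    (∀ pr ∈ t.edges, E (g pr.1) (g pr.2)) ↔ (∀ pr ∈ t'.edges, E (g pr.1) (g pr.2)) := by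
  have h := hsat (fun i => some (g i))
  rw [BTree.termOp, BTree.termOp, evalFrom_gaOp, evalFrom_gaOp] at h
  simp only [BTree.edges]
  constructor
  · intro hc
    rw [if_pos hc] at h
    by_contra hc'
    rw [if_neg hc'] at h
    exact Option.some_ne_none _ h
  · intro hc
    rw [if_pos hc] at h
    by_contra hc'
    rw [if_neg hc'] at h
    exact Option.some_ne_none _ h.symm

/-- A finite walk: `p 0 → p 1 → ⋯ → p len`. -/
def WalkN (p : ℕ → V) (len : ℕ) : Prop := ∀ i < len, E (p i) (p (i + 1))

lemma WalkN.reach {E : V → V → Prop} {p : ℕ → V} {len : ℕ} (h : WalkN E p len)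
    {i j : ℕ} (hij : i ≤ j) (hj : j ≤ len) : Reach E (p i) (p j) := by
  induction j with
  | zero => rw [Nat.le_zero] at hij; subst hij; exact Relation.ReflTransGen.refl
  | succ j ih =>
    rcases Nat.lt_or_ge i (j+1) with hlt | hge
    · exact Relation.ReflTransGen.tail (ih (by omega) (by omega)) (h j (by omega))
    · have : i = j + 1 := by omega
      subst this; exact Relation.ReflTransGen.refl

lemma reach_exists_walk {E : V → V → Prop} {u x : V} (h : Reach E u x) :
    ∃ len p, WalkN E p len ∧ p 0 = u ∧ p len = x := by
  induction h with
  | refl => exact ⟨0, fun _ => u, fun i hi => absurd hi (by omega), rfl, rfl⟩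
  | @tail b c hr he ih =>
    obtain ⟨len, p, hw, h0, hl⟩ := ih
    refine ⟨len + 1, fun j => if j ≤ len then p j else c, ?_, by simp [h0], by simp⟩
    intro i hi
    rcases Nat.lt_or_ge i len with h1 | h1
    · simp only [if_pos (by omega : i ≤ len), if_pos (by omega : i + 1 ≤ len)]
      exact hw i h1
    · have hil : i = len := by omega
      simp only [hil, if_pos (le_refl len), if_neg (by omega : ¬ len + 1 ≤ len)]
      rw [hl]; exact he

/-- Concatenation of walks. -/
lemma walk_concat {E : V → V → Prop} {p q : ℕ → V} {a b : ℕ}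
    (hp : WalkN E p a) (hq : WalkN E q b) (hmatch : p a = q 0) :
    ∃ w, WalkN E w (a + b) ∧ (∀ j ≤ a, w j = p j) ∧ (∀ j, w (a + j) = q j) := by
  refine ⟨fun j => if j ≤ a then p j else q (j - a), ?_, ?_, ?_⟩
  · intro i hi
    rcases Nat.lt_or_ge i a with h1 | h1
    · simp only [if_pos (by omega : i ≤ a), if_pos (by omega : i + 1 ≤ a)]
      exact hp i h1
    · rcases Nat.eq_or_lt_of_le h1 with h2 | h2
      · simp only [← h2, if_pos (le_refl a), if_neg (by omega : ¬ a + 1 ≤ a)]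
        have e0 : a + 1 - a = 1 := by omega
        rw [e0, hmatch]
        exact hq 0 (by omega)
      · simp only [if_neg (by omega : ¬ i ≤ a), if_neg (by omega : ¬ i + 1 ≤ a)]
        have e1 : i + 1 - a = (i - a) + 1 := by omega
        rw [e1]
        exact hq (i - a) (by omega)
  · intro j hj; simp [hj]
  · intro j
    rcases Nat.eq_zero_or_pos j with rfl | hj
    · simp [hmatch]
    · simp only [if_neg (by omega : ¬ a + j ≤ a)]
      congr 1; omega

end GraphAlg

section Wlen

variable {V : Type*} {E : V → V → Prop}

/-- There is a walk of length exactly `l` from `u` to `x`. -/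
def Wlen (E : V → V → Prop) (u x : V) (l : ℕ) : Prop :=
  ∃ p, WalkN E p l ∧ p 0 = u ∧ p l = x

lemma Wlen.zero (u : V) : Wlen E u u 0 :=
  ⟨fun _ => u, fun i hi => absurd hi (by omega), rfl, rfl⟩

lemma Wlen.single {u x : V} (h : E u x) : Wlen E u x 1 := by
  refine ⟨fun j => if j = 0 then u else x, ?_, by simp, by simp⟩
  intro i hi
  have : i = 0 := by omega
  subst this
  simpa using h

lemma Wlen.trans {u x y : V} {a b : ℕ} (h1 : Wlen E u x a) (h2 : Wlen E x y b) :
    Wlen E u y (a + b) := by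
  obtain ⟨p, hp, hp0, hpa⟩ := h1
  obtain ⟨q, hq, hq0, hqb⟩ := h2
  obtain ⟨w, hw, hw1, hw2⟩ := walk_concat hp hq (by rw [hpa, hq0])
  exact ⟨w, hw, by rw [hw1 0 (by omega), hp0], by rw [hw2 b, hqb]⟩

lemma Wlen.reach {u x : V} {l : ℕ} (h : Wlen E u x l) : Reach E u x := by
  obtain ⟨p, hp, h0, hl⟩ := h
  have := hp.reach (Nat.zero_le l) (le_refl l)
  rwa [h0, hl] at this

lemma reach_iff_wlen {u x : V} : Reach E u x ↔ ∃ l, Wlen E u x l := by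
  constructor
  · intro h
    obtain ⟨len, p, hw, h0, hl⟩ := reach_exists_walk h
    exact ⟨len, p, hw, h0, hl⟩
  · rintro ⟨l, h⟩; exact h.reach

lemma Wlen.smul {y : V} {l : ℕ} (h : Wlen E y y l) : ∀ k, Wlen E y y (k * l) := by
  intro k
  induction k with
  | zero => simpa using Wlen.zero y
  | succ k ih =>
    have := ih.trans h
    simpa [Nat.succ_mul] using this

/-- A helper: congruence modulo the lcm. -/
lemma modEq_lcm {a b x y : ℕ} (h1 : x ≡ y [MOD a]) (h2 : x ≡ y [MOD b]) :
    x ≡ y [MOD Nat.lcm a b] := by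
  rcases le_total x y with h | h
  · have d1 : a ∣ y - x := (Nat.modEq_iff_dvd' h).mp h1
    have d2 : b ∣ y - x := (Nat.modEq_iff_dvd' h).mp h2
    exact (Nat.modEq_iff_dvd' h).mpr (Nat.lcm_dvd d1 d2)
  · have d1 : a ∣ x - y := (Nat.modEq_iff_dvd' h).mp h1.symm
    have d2 : b ∣ x - y := (Nat.modEq_iff_dvd' h).mp h2.symm
    exact ((Nat.modEq_iff_dvd' h).mpr (Nat.lcm_dvd d1 d2)).symm

end Wlen

section SCCMachine

variable {V : Type*} {E : V → V → Prop} {v : V}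

lemma exists_pos_loop (hv : InNontrivialSCC E v) {x : V} (hx : x ∈ scc E v) :
    ∃ l, 1 ≤ l ∧ Wlen E x x l := by
  obtain ⟨u0, he, hr⟩ := hv
  obtain ⟨a, ha⟩ := reach_iff_wlen.mp hx.1
  obtain ⟨b, hb⟩ := reach_iff_wlen.mp hx.2
  obtain ⟨c, hc⟩ := reach_iff_wlen.mp hr
  have hvv : Wlen E v v (1 + c) := (Wlen.single he).trans hc
  have : Wlen E x x (a + (1 + c) + b) := (ha.trans hvv).trans hb
  exact ⟨_, by omega, this⟩

lemma periodic_walk {x : V} {l : ℕ} (hl : 1 ≤ l) {p : ℕ → V}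
    (hp : WalkN E p l) (hp0 : p 0 = x) (hpl : p l = x) :
    ∀ j, E (p (j % l)) (p ((j + 1) % l)) := by
  intro j
  have hjl : j % l < l := Nat.mod_lt _ (by omega)
  have hmod : (j + 1) % l = (j % l + 1) % l := by
    conv_lhs => rw [← Nat.mod_add_mod]
  rcases Nat.lt_or_ge (j % l + 1) l with h | h
  · rw [hmod, Nat.mod_eq_of_lt h]
    exact hp _ hjl
  · have heq : j % l + 1 = l := by omega
    rw [hmod, heq, Nat.mod_self]
    have := hp (j % l) hjl
    rw [heq, hpl, ← hp0] at this
    exact this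

lemma glue (hv : InNontrivialSCC E v) {x y : V} (hx : x ∈ scc E v) (hy : y ∈ scc E v)
    {p : ℕ → V} {len : ℕ} (hp : WalkN E p len) (h0 : p 0 = x) (hl : p len = y) (a : ℕ) :
    ∃ w : ℕ → V, (∀ j, E (w j) (w (j + 1))) ∧ (∀ j ≤ len, w (a + j) = p j) := by
  obtain ⟨lx, hlx1, px, hpx, hpx0, hpxl⟩ := exists_pos_loop hv hx
  obtain ⟨ly, hly1, py, hpy, hpy0, hpyl⟩ := exists_pos_loop hv hy
  have cpx := periodic_walk hlx1 hpx hpx0 hpxl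
  have cpy := periodic_walk hly1 hpy hpy0 hpyl
  have haa : a ≤ a * lx := by
    calc a = a * 1 := (Nat.mul_one a).symm
    _ ≤ a * lx := Nat.mul_le_mul_left a hlx1
  refine ⟨fun j => if j < a then px ((a * lx - a + j) % lx)
      else if j ≤ a + len then p (j - a) else py ((j - a - len) % ly), ?_, ?_⟩
  · intro j
    rcases Nat.lt_or_ge (j + 1) a with c1 | c1
    · -- both in prefix
      simp only [if_pos (by omega : j < a), if_pos c1]
      have e : a * lx - a + (j + 1) = (a * lx - a + j) + 1 := by omega
      rw [e]
      exact cpx _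
    rcases Nat.eq_or_lt_of_le c1 with c2 | c2
    · -- j + 1 = a
      simp only [if_pos (by omega : j < a), if_neg (by omega : ¬ a < a), ← c2,
        if_pos (by omega : a ≤ a + len)]
      have e1 : a - a = 0 := Nat.sub_self a
      rw [e1, h0, ← hpx0, ← Nat.mul_mod_left a lx]
      have e2 : a * lx - a + j + 1 = a * lx := by omega
      have := cpx (a * lx - a + j)
      rw [e2] at this
      exact this
    rcases Nat.lt_or_ge j (a + len) with c3 | c3
    · -- inside p
      simp only [if_neg (by omega : ¬ j < a), if_pos (by omega : j ≤ a + len),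
        if_neg (by omega : ¬ j + 1 < a), if_pos (by omega : j + 1 ≤ a + len)]
      have e : j + 1 - a = (j - a) + 1 := by omega
      rw [e]
      exact hp _ (by omega)
    rcases Nat.eq_or_lt_of_le c3 with c4 | c4
    · -- j = a + len
      simp only [if_neg (by omega : ¬ j < a), if_pos (by omega : j ≤ a + len),
        if_neg (by omega : ¬ j + 1 < a), if_neg (by omega : ¬ j + 1 ≤ a + len)]
      have e1 : j - a = len := by omega
      have e2 : j + 1 - a - len = 1 := by omega
      rw [e1, e2, hl, ← hpy0, ← Nat.zero_mod ly]
      exact cpy 0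
    · -- beyond
      simp only [if_neg (by omega : ¬ j < a), if_neg (by omega : ¬ j ≤ a + len),
        if_neg (by omega : ¬ j + 1 < a), if_neg (by omega : ¬ j + 1 ≤ a + len)]
      have e : j + 1 - a - len = (j - a - len) + 1 := by omega
      rw [e]
      exact cpy _
  · intro j hj
    simp only [if_neg (by omega : ¬ a + j < a), if_pos (by omega : a + j ≤ a + len)]
    congr 1
    omega

end SCCMachine

section Shortcut

variable {V : Type*} {E : V → V → Prop} {v : V}

lemma iterate_shortcut (hv : InNontrivialSCC E v) {a s : ℕ} (hs : 2 ≤ s)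
    (hshort : ∀ w : ℕ → V, (∀ j, E (w j) (w (j + 1))) → E (w a) (w (a + s))) :
    ∀ k x y, x ∈ scc E v → y ∈ scc E v → Wlen E x y (1 + k * (s - 1)) → E x y := by
  intro k
  induction k with
  | zero =>
    rintro x y hx hy ⟨p, hp, h0, h1⟩
    have := hp 0 (by omega)
    rw [h0] at this
    simp only [Nat.zero_mul, Nat.add_zero] at h1
    rwa [h1] at this
  | succ k ih =>
    rintro x y hx hy ⟨p, hp, h0, h1⟩
    have hsm : (k + 1) * (s - 1) = k * (s - 1) + (s - 1) := Nat.succ_mul k (s - 1)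
    obtain ⟨w, hw, hwp⟩ := glue hv hx hy hp h0 h1 a
    have hxw : w (a + 0) = x := by rw [hwp 0 (by omega), h0]
    have hps : w (a + s) = p s := hwp s (by omega)
    have hexy : E x (p s) := by
      have := hshort w hw
      rw [hps] at this
      rw [Nat.add_zero] at hxw
      rwa [hxw] at this
    apply ih x y hx hy
    refine ⟨fun j => if j = 0 then x else p (j + (s - 1)), ?_, by simp, ?_⟩
    · intro i hi
      rcases Nat.eq_zero_or_pos i with rfl | hip
      · simp only [if_pos rfl, if_neg (by omega : ¬ (0 : ℕ) + 1 = 0)]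
        have e : 0 + 1 + (s - 1) = s := by omega
        rw [e]
        exact hexy
      · simp only [if_neg (by omega : ¬ i = 0), if_neg (by omega : ¬ i + 1 = 0)]
        have e : i + 1 + (s - 1) = (i + (s - 1)) + 1 := by omega
        rw [e]
        exact hp _ (by omega)
    · simp only [if_neg (by omega : ¬ 1 + k * (s - 1) = 0)]
      have e : 1 + k * (s - 1) + (s - 1) = 1 + (k + 1) * (s - 1) := by omega
      rw [e, h1]

end Shortcut

end AssocSpec
open AssocSpec in
/-- If the graph algebra of a digraph `G` satisfies a
nontrivial bracketing identity `t ≈ t'`, then every strongly connected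
component of `G` is either trivial or an `m`-whirl for some divisor `m` of
`M(t,t')`. -/
theorem stmt15 {V : Type*} [Nonempty V] (E : V → V → Prop) (n : ℕ)
    (t t' : BTree) (ht : t.size = n) (ht' : t'.size = n) (hne : t ≠ t')
    (hsat : Satisfies (gaOp E) t t') :
    ∀ v : V,
      (scc E v = {v} ∧ ¬ E v v) ∨
      ∃ m : ℕ, 1 ≤ m ∧ m ∣ Mval t t' ∧ IsWhirlOn E (scc E v) m := by
  intro v
  classical
  by_cases hv : InNontrivialSCC E v
  swap
  · left
    constructor
    · apply Set.eq_singleton_iff_unique_mem.mpr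
      constructor
      · exact ⟨Relation.ReflTransGen.refl, Relation.ReflTransGen.refl⟩
      · intro u hu
        rcases Relation.ReflTransGen.cases_head hu.2 with h | ⟨z, hz, hr⟩
        · exact h.symm
        · exact absurd ⟨z, hz, hr.trans hu.1⟩ hv
    · intro h
      exact hv ⟨v, h, Relation.ReflTransGen.refl⟩
  right
  -- a differing depth index
  have hdne : ∃ i, i < n ∧ t.depth i ≠ t'.depth i := by
    by_contra hco
    push_neg at hco
    apply hne
    apply BTree.depths_injective
    apply List.ext_getElem
      (by rw [BTree.depths_length, BTree.depths_length, ht, ht'])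
    intro i h1 h2
    have h1' : i < n := by rwa [BTree.depths_length, ht] at h1
    have h3 := hco i h1'
    rwa [BTree.depth, BTree.depth, List.getD_eq_getElem _ _ h1,
      List.getD_eq_getElem _ _ h2] at h3
  have hvK : v ∈ scc E v := ⟨Relation.ReflTransGen.refl, Relation.ReflTransGen.refl⟩
  obtain ⟨L, hL1, hLw⟩ := exists_pos_loop hv hvK
  -- the period m
  obtain ⟨g, hg⟩ := Int.subgroup_cyclic
    (AddSubgroup.closure ((fun l : ℕ => (l : ℤ)) '' {l : ℕ | Wlen E v v l}))
  set m := g.natAbs with hm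
  have hmdvd : ∀ l : ℕ, Wlen E v v l → m ∣ l := by
    intro l hlw
    have h1 : (l : ℤ) ∈ AddSubgroup.closure
        ((fun l : ℕ => (l : ℤ)) '' {l : ℕ | Wlen E v v l}) :=
      AddSubgroup.subset_closure ⟨l, hlw, rfl⟩
    rw [hg, AddSubgroup.mem_closure_singleton] at h1
    obtain ⟨z, hz⟩ := h1
    have h2 : g ∣ (l : ℤ) := ⟨z, by rw [← hz, zsmul_eq_mul, Int.cast_id]; ring⟩
    exact_mod_cast (Int.natAbs_dvd).mpr h2
  have hmpos : 1 ≤ m := by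
    by_contra hc
    have hm0 : m = 0 := by omega
    have h1 := hmdvd L hLw
    rw [hm0] at h1
    have := Nat.eq_zero_of_zero_dvd h1
    omega
  haveI : NeZero m := ⟨by omega⟩
  -- uniqueness of walk-length classes
  have hU : ∀ x ∈ scc E v, ∀ l1 l2 : ℕ, Wlen E v x l1 → Wlen E v x l2 →
      ((l1 : ZMod m) = (l2 : ZMod m)) := by
    intro x hx l1 l2 h1 h2
    obtain ⟨r, hr⟩ := reach_iff_wlen.mp hx.1
    have z1 : ((l1 + r : ℕ) : ZMod m) = 0 :=
      (ZMod.natCast_eq_zero_iff _ _).mpr (hmdvd _ (h1.trans hr))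
    have z2 : ((l2 + r : ℕ) : ZMod m) = 0 :=
      (ZMod.natCast_eq_zero_iff _ _).mpr (hmdvd _ (h2.trans hr))
    push_cast at z1 z2
    exact add_right_cancel (z1.trans z2.symm)
  -- edges increment the class
  have hW2 : ∀ x ∈ scc E v, ∀ y ∈ scc E v, E x y → ∀ l1 l2 : ℕ,
      Wlen E v x l1 → Wlen E v y l2 → (l2 : ZMod m) = (l1 : ZMod m) + 1 := by
    intro x hx y hy he l1 l2 h1 h2
    have h3 : Wlen E v y (l1 + 1) := h1.trans (Wlen.single he)
    have h4 := hU y hy l2 (l1 + 1) h2 h3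
    rw [h4]
    push_cast
    ring
  -- the cyclic walk through v
  obtain ⟨c, hcw, hc0, hcL⟩ := hLw
  set cp : ℕ → V := fun j => c (j % L) with hcp
  have hcpwalk : ∀ j, E (cp j) (cp (j + 1)) := periodic_walk hL1 hcw hc0 hcL
  have hcp0 : cp 0 = v := by simp [hcp, hc0]
  have hcpw : ∀ j, Wlen E v (cp j) j :=
    fun j => ⟨cp, fun i _ => hcpwalk i, hcp0, rfl⟩
  have hcpK : ∀ j, cp j ∈ scc E v := by
    intro j
    constructor
    · have h5 := hcw.reach (le_of_lt (Nat.mod_lt j (by omega))) (le_refl L)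
      rw [hcL] at h5
      exact h5
    · exact (hcpw j).reach
  -- hom transfer along infinite walks
  have hsat' : Satisfies (gaOp E) t' t := fun f => (hsat f).symm
  have htrans : ∀ w : ℕ → V, (∀ j, E (w j) (w (j + 1))) →
      ∀ pr ∈ t'.edges, E (w (t.depth pr.1)) (w (t.depth pr.2)) := by
    intro w hw
    apply (hom_transfer E hsat (fun i => w (t.depth i))).mp
    intro pr hpr
    have hd := BTree.edgesFrom_depth t 0 pr hpr
    simp only [Nat.sub_zero] at hd
    show E (w (t.depth pr.1)) (w (t.depth pr.2))
    rw [hd]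
    exact hw _
  have htrans' : ∀ w : ℕ → V, (∀ j, E (w j) (w (j + 1))) →
      ∀ pr ∈ t.edges, E (w (t'.depth pr.1)) (w (t'.depth pr.2)) := by
    intro w hw
    apply (hom_transfer E hsat' (fun i => w (t'.depth i))).mp
    intro pr hpr
    have hd := BTree.edgesFrom_depth t' 0 pr hpr
    simp only [Nat.sub_zero] at hd
    show E (w (t'.depth pr.1)) (w (t'.depth pr.2))
    rw [hd]
    exact hw _
  -- depth sequences are congruent mod m
  have hlev : ∀ i, i < n → ((t.depth i : ZMod m) = (t'.depth i : ZMod m)) := by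
    intro i
    induction i using Nat.strong_induction_on with
    | _ i ih =>
      intro hin
      rcases Nat.eq_zero_or_pos i with rfl | hip
      · rw [BTree.depth_zero, BTree.depth_zero]
      · obtain ⟨p, hpe⟩ := BTree.exists_parent t' 0 i (by omega) (by rw [ht']; omega)
        obtain ⟨hb0, hb1, hb2⟩ := BTree.edgesFrom_bounds t' 0 (p, i) hpe
        have hb1' : p < i := hb1
        have hdrel := BTree.edgesFrom_depth t' 0 (p, i) hpe
        simp only [Nat.sub_zero] at hdrel
        have hdrel' : t'.depth i = t'.depth p + 1 := hdrel
        have hE : E (cp (t.depth p)) (cp (t.depth i)) := htrans cp hcpwalk (p, i) hpe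
        have h2 := hW2 _ (hcpK (t.depth p)) _ (hcpK (t.depth i)) hE _ _
          (hcpw (t.depth p)) (hcpw (t.depth i))
        rw [h2, ih p hb1' (by omega), hdrel']
        push_cast
        ring
  have hA : ∀ i, i < n → (t.depth i ≡ t'.depth i [MOD m]) :=
    fun i hi => (ZMod.natCast_eq_natCast_iff _ _ _).mp (hlev i hi)
  obtain ⟨i0, hi0n, hi0ne⟩ := hdne
  -- m divides Mval
  have hMdvd : m ∣ Mval t t' := by
    show m ∣ sSup {m' : ℕ | ∀ i < t.size, t.depth i ≡ t'.depth i [MOD m']}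
    simp only [ht]
    set A : Set ℕ := {m' : ℕ | ∀ i < n, t.depth i ≡ t'.depth i [MOD m']} with hAdef
    have h1A : (1 : ℕ) ∈ A := fun i _ => Nat.modEq_one
    have hmA : m ∈ A := hA
    have hdiff : ∀ b ∈ A,
        b ∣ (max (t.depth i0) (t'.depth i0) - min (t.depth i0) (t'.depth i0)) := by
      intro b hb
      have hmod := hb i0 hi0n
      rcases le_total (t.depth i0) (t'.depth i0) with h | h
      · have h7 := (Nat.modEq_iff_dvd' h).mp hmod
        simpa [max_eq_right h, min_eq_left h] using h7
      · have h7 := (Nat.modEq_iff_dvd' h).mp hmod.symm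
        simpa [max_eq_left h, min_eq_right h] using h7
    have hDpos : 0 < max (t.depth i0) (t'.depth i0) - min (t.depth i0) (t'.depth i0) := by
      rcases le_total (t.depth i0) (t'.depth i0) with h | h
      · rw [max_eq_right h, min_eq_left h]
        rcases Nat.eq_or_lt_of_le h with h2 | h2
        · exact absurd h2 hi0ne
        · omega
      · rw [max_eq_left h, min_eq_right h]
        rcases Nat.eq_or_lt_of_le h with h2 | h2
        · exact absurd h2.symm hi0ne
        · omega
    have hbdd : BddAbove A := ⟨_, fun b hb => Nat.le_of_dvd hDpos (hdiff b hb)⟩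
    have hAne : A.Nonempty := ⟨1, h1A⟩
    have hsup := Nat.sSup_mem hAne hbdd
    have hlcm : Nat.lcm m (sSup A) ∈ A := fun i hi => modEq_lcm (hmA i hi) (hsup i hi)
    have h3 : 1 ≤ sSup A := le_csSup hbdd h1A
    have h5 : 0 < Nat.lcm m (sSup A) := Nat.lcm_pos (by omega) (by omega)
    have h2 : Nat.lcm m (sSup A) ≤ sSup A := le_csSup hbdd hlcm
    have h6 := Nat.le_of_dvd h5 (Nat.dvd_lcm_right m (sSup A))
    have h4 : Nat.lcm m (sSup A) = sSup A := by omega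
    exact h4 ▸ Nat.dvd_lcm_left m (sSup A)
  -- the shortcut
  have hshortcut : ∃ a s : ℕ, 2 ≤ s ∧ m ∣ (s - 1) ∧
      ∀ w : ℕ → V, (∀ j, E (w j) (w (j + 1))) → E (w a) (w (a + s)) := by
    have hdne2 : ∃ i, i < n ∧ t.depth i ≠ t'.depth i := ⟨i0, hi0n, hi0ne⟩
    set j0 := Nat.find hdne2 with hj0
    obtain ⟨hj0n, hj0ne⟩ := Nat.find_spec hdne2
    rw [← hj0] at hj0n hj0ne
    have hmin : ∀ j, j < j0 → t.depth j = t'.depth j := by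
      intro j hj
      have h7 := Nat.find_min hdne2 hj
      push_neg at h7
      exact h7 (by omega)
    have hj0pos : 0 < j0 := by
      rcases Nat.eq_zero_or_pos j0 with h7 | h7
      · rw [h7, BTree.depth_zero, BTree.depth_zero] at hj0ne
        exact absurd rfl hj0ne
      · exact h7
    have hmodj := hA j0 hj0n
    rcases Nat.lt_or_ge (t'.depth j0) (t.depth j0) with hcase | hcase
    · obtain ⟨p, hpe⟩ := BTree.exists_parent t' 0 j0 hj0pos (by rw [ht']; omega)
      obtain ⟨hb0, hb1, hb2⟩ := BTree.edgesFrom_bounds t' 0 (p, j0) hpe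
      have hb1' : p < j0 := hb1
      have hdrel := BTree.edgesFrom_depth t' 0 (p, j0) hpe
      simp only [Nat.sub_zero] at hdrel
      have hdrel' : t'.depth j0 = t'.depth p + 1 := hdrel
      have hpd : t.depth p = t'.depth p := hmin p hb1'
      refine ⟨t.depth p, t.depth j0 - t.depth p, by omega, ?_, ?_⟩
      · have hdv := (Nat.modEq_iff_dvd' (le_of_lt hcase)).mp hmodj.symm
        have e : t.depth j0 - t.depth p - 1 = t.depth j0 - t'.depth j0 := by omega
        rwa [e]
      · intro w hw
        have h8 : E (w (t.depth p)) (w (t.depth j0)) := htrans w hw (p, j0) hpe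
        have e : t.depth p + (t.depth j0 - t.depth p) = t.depth j0 := by omega
        rw [e]
        exact h8
    · have hcase' : t.depth j0 < t'.depth j0 := by omega
      obtain ⟨p, hpe⟩ := BTree.exists_parent t 0 j0 hj0pos (by rw [ht]; omega)
      obtain ⟨hb0, hb1, hb2⟩ := BTree.edgesFrom_bounds t 0 (p, j0) hpe
      have hb1' : p < j0 := hb1
      have hdrel := BTree.edgesFrom_depth t 0 (p, j0) hpe
      simp only [Nat.sub_zero] at hdrel
      have hdrel' : t.depth j0 = t.depth p + 1 := hdrel
      have hpd : t.depth p = t'.depth p := hmin p hb1'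
      refine ⟨t'.depth p, t'.depth j0 - t'.depth p, by omega, ?_, ?_⟩
      · have hdv := (Nat.modEq_iff_dvd' (le_of_lt hcase')).mp hmodj
        have e : t'.depth j0 - t'.depth p - 1 = t'.depth j0 - t.depth j0 := by omega
        rwa [e]
      · intro w hw
        have h8 : E (w (t'.depth p)) (w (t'.depth j0)) := htrans' w hw (p, j0) hpe
        have e : t'.depth p + (t'.depth j0 - t'.depth p) = t'.depth j0 := by omega
        rw [e]
        exact h8
  obtain ⟨a, s, hs2, hms, hshort⟩ := hshortcut
  have hR1 := iterate_shortcut hv hs2 hshort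
  set M' := s - 1 with hM'def
  have hM1 : 1 ≤ M' := by omega
  -- realizing residues by loops at y
  have hgen : ∀ y ∈ scc E v, ∀ z : ℤ, (m : ℤ) ∣ z →
      ∃ l : ℕ, Wlen E y y l ∧ ((l : ZMod M') = (z : ZMod M')) := by
    intro y hy z hz
    obtain ⟨α, hα⟩ := reach_iff_wlen.mp hy.2
    obtain ⟨β, hβ⟩ := reach_iff_wlen.mp hy.1
    have hT0 : ∃ l : ℕ, Wlen E y y l ∧ ((l : ZMod M') = 0) := ⟨0, Wlen.zero y, by simp⟩
    have hTadd : ∀ z1 z2 : ZMod M',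
        (∃ l : ℕ, Wlen E y y l ∧ (l : ZMod M') = z1) →
        (∃ l : ℕ, Wlen E y y l ∧ (l : ZMod M') = z2) →
        (∃ l : ℕ, Wlen E y y l ∧ (l : ZMod M') = z1 + z2) := by
      rintro z1 z2 ⟨l1, hl1, rfl⟩ ⟨l2, hl2, rfl⟩
      exact ⟨l1 + l2, hl1.trans hl2, by push_cast; ring⟩
    have hTneg : ∀ z1 : ZMod M',
        (∃ l : ℕ, Wlen E y y l ∧ (l : ZMod M') = z1) →
        (∃ l : ℕ, Wlen E y y l ∧ (l : ZMod M') = -z1) := by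
      rintro z1 ⟨l1, hl1, rfl⟩
      refine ⟨(2 * M' - 1) * l1, hl1.smul _, ?_⟩
      push_cast [Nat.cast_sub (by omega : 1 ≤ 2 * M')]
      rw [ZMod.natCast_self]
      ring
    have hzH : z ∈ AddSubgroup.closure ((fun l : ℕ => (l : ℤ)) '' {l : ℕ | Wlen E v v l}) := by
      rw [hg, AddSubgroup.mem_closure_singleton]
      obtain ⟨u, hu⟩ := hz
      rcases Int.natAbs_eq g with he | he
      · exact ⟨u, by rw [zsmul_eq_mul, Int.cast_id, hu, he, hm]; ring⟩
      · exact ⟨-u, by rw [zsmul_eq_mul, Int.cast_id, hu, he, hm]; ring⟩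
    refine AddSubgroup.closure_induction
      (p := fun (w : ℤ) _ => ∃ l : ℕ, Wlen E y y l ∧ ((l : ZMod M') = (w : ZMod M')))
      ?_ ?_ ?_ ?_ hzH
    · rintro w ⟨σ, hσ, rfl⟩
      have hw1 : Wlen E y y (β + σ + α) := (hβ.trans hσ).trans hα
      have hw2 : Wlen E y y (β + α) := hβ.trans hα
      obtain ⟨l, hl, hcast⟩ := hTadd _ _ ⟨_, hw1, rfl⟩ (hTneg _ ⟨_, hw2, rfl⟩)
      refine ⟨l, hl, ?_⟩
      rw [hcast]
      push_cast
      ring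
    · simpa using hT0
    · intro w1 w2 _ _ h1 h2
      obtain ⟨l, hl, hcast⟩ := hTadd _ _ h1 h2
      exact ⟨l, hl, by rw [hcast]; push_cast; ring⟩
    · intro w1 _ h1
      obtain ⟨l, hl, hcast⟩ := hTneg _ h1
      exact ⟨l, hl, by rw [hcast]; push_cast; ring⟩
  -- completeness
  have hW3 : ∀ x ∈ scc E v, ∀ y ∈ scc E v, ∀ lx ly : ℕ, Wlen E v x lx → Wlen E v y ly →
      ((ly : ZMod m) = (lx : ZMod m) + 1) → E x y := by
    intro x hx y hy lx ly hwx hwy hcls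
    obtain ⟨r, hr⟩ := reach_iff_wlen.mp hx.1
    have hl0 : Wlen E x y (r + ly) := hr.trans hwy
    have hrx : ((lx + r : ℕ) : ZMod m) = 0 :=
      (ZMod.natCast_eq_zero_iff _ _).mpr (hmdvd _ (hwx.trans hr))
    have hmod : (r + ly) ≡ 1 [MOD m] := by
      have h1 : ((r + ly : ℕ) : ZMod m) = ((1 : ℕ) : ZMod m) := by
        push_cast
        push_cast at hrx
        have h2 : (r : ZMod m) = -(lx : ZMod m) := eq_neg_of_add_eq_zero_right hrx
        rw [h2, hcls]
        ring
      exact (ZMod.natCast_eq_natCast_iff _ _ _).mp h1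
    have hint : (m : ℤ) ∣ (1 : ℤ) - ((r + ly : ℕ) : ℤ) := by
      have h9 := hmod.dvd
      exact_mod_cast h9
    obtain ⟨l, hly', hcast⟩ := hgen y hy _ hint
    obtain ⟨ρ, hρ1, hρw⟩ := exists_pos_loop hv hy
    have hwtot : Wlen E x y ((r + ly) + (l + M' * ρ)) :=
      hl0.trans (hly'.trans (hρw.smul M'))
    have hcast2 : (((r + ly) + (l + M' * ρ) : ℕ) : ZMod M') = ((1 : ℕ) : ZMod M') := by
      push_cast
      rw [hcast, ZMod.natCast_self]
      push_cast
      ring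
    have hmod2 : ((r + ly) + (l + M' * ρ)) ≡ 1 [MOD M'] :=
      (ZMod.natCast_eq_natCast_iff _ _ _).mp hcast2
    have hge : 1 ≤ (r + ly) + (l + M' * ρ) := by
      have h10 : M' * 1 ≤ M' * ρ := Nat.mul_le_mul_left _ hρ1
      omega
    obtain ⟨k, hk⟩ := (Nat.modEq_iff_dvd' hge).mp hmod2.symm
    have hcomm : M' * k = k * M' := Nat.mul_comm _ _
    have he : (r + ly) + (l + M' * ρ) = 1 + k * M' := by omega
    exact hR1 k x y hx hy (he ▸ hwtot)
  -- assemble the whirl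
  refine ⟨m, hmpos, hMdvd, ?_⟩
  refine ⟨fun i => {x | x ∈ scc E v ∧ ∃ l : ℕ, Wlen E v x l ∧ ((l : ZMod m) = i)},
    ?_, ?_, ?_, ?_⟩
  · intro i
    exact ⟨cp i.val, hcpK _, i.val, hcpw _, ZMod.natCast_rightInverse i⟩
  · intro i x hx
    exact hx.1
  · intro x hx
    obtain ⟨l, hwl⟩ := reach_iff_wlen.mp hx.2
    refine ⟨(l : ZMod m), ⟨hx, l, hwl, rfl⟩, ?_⟩
    rintro i ⟨-, l', hwl', rfl⟩
    exact hU x hx l' l hwl' hwl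
  · intro x hx y hy
    constructor
    · intro he
      obtain ⟨lx, hwx⟩ := reach_iff_wlen.mp hx.2
      exact ⟨(lx : ZMod m), ⟨hx, lx, hwx, rfl⟩,
        ⟨hy, lx + 1, hwx.trans (Wlen.single he), by push_cast; ring⟩⟩
    · rintro ⟨i, ⟨-, lx, hwx, rfl⟩, ⟨-, ly, hwy, hcls⟩⟩
      exact hW3 x hx y hy lx ly hwx hwy hcls
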